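/- Let h_n be the number of block-cyclic permutations of length n. Then the generating function H(z) = Σ_{n≥0} h_n zⁿ equals (1-z)²/(1-3z+2z²-z³); equivalently h_n = h_{n-1} + Σ_{k≥2} (k-1) h_{n-k}, i.e., h_n satisfies h_n = 3h_{n-1} - 2h_{n-2} + h_{n-3} for n ≥ 3 (with h₀ = 1, h₁ = 1, h₂ = 2). -/

import Mathlib

def IsBlockCyclic {n : ℕ} (p : Equiv.Perm (Fin n)) : Prop :=
  ∃ (t : ℕ) (s : ℕ → ℕ), s 0 = 0 ∧ s t = n ∧ (∀ b, b < t → s b < s (b + 1)) ∧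
    ∀ b, b < t → ∃ d : ℕ, d < s (b + 1) - s b ∧ (2 ≤ s (b + 1) - s b → 1 ≤ d) ∧
      ∀ j, s b + j < s (b + 1) → ∀ h : s b + j < n,
        (p ⟨s b + j, h⟩ : ℕ) = s b + (j + d) % (s (b + 1) - s b)

/-- `h n`: the number of block-cyclic permutations of length n. -/
noncomputable def blockCyclicCount (n : ℕ) : ℕ :=
  Nat.card {p : Equiv.Perm (Fin n) // IsBlockCyclic p}

open PowerSeries in
theorem BCaux.gf_of_rec  (g : ℕ → ℚ) (h3 : ∀ n : ℕ, g (n+3) - 3*g (n+2) + 2*g (n+1) - g n = 0)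
    (h0 : g 0 = 1) (h1 : g 1 = 1) (h2 : g 2 = 2) :
    (PowerSeries.mk g) * (1 - 3 * X + 2 * X ^ 2 - X ^ 3) = (1 - X) ^ 2 := by
  apply PowerSeries.ext
  intro n
  rw [show (mk g) * (1 - 3*X + 2*X^2 - X^3)
      = mk g - C (3:ℚ) * (mk g * X^1) + C (2:ℚ) * (mk g * X^2) - mk g * X^3 by
    rw [map_ofNat, map_ofNat]; ring,
    show ((1 - X : ℚ⟦X⟧))^2 = 1 - C (2:ℚ) * X^1 + X^2 by rw [map_ofNat]; ring]
  simp only [map_sub, map_add, coeff_C_mul, coeff_mul_X_pow', coeff_mk, coeff_one,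
    coeff_X_pow, coeff_C]
  rcases n with _ | _ | _ | n
  · norm_num [h0]
  · norm_num [h0, h1]
  · norm_num [h0, h1, h2]
  · have := h3 n
    have e1 : n + 3 - 1 = n + 2 := by omega
    have e2 : n + 3 - 2 = n + 1 := by omega
    have e3 : n + 3 - 3 = n := by omega
    simp only [show (1 ≤ n + 3) = True by simp, show (2 ≤ n + 3) = True by simp,
      show (3 ≤ n + 3) = True by simp, if_true, e1, e2, e3]
    split_ifs <;> first | contradiction | omega | linarith

namespace BCaux

theorem s_mono {t : ℕ} {s : ℕ → ℕ} (hs : ∀ b, b < t → s b < s (b + 1)) :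
    ∀ {a b : ℕ}, a ≤ b → b ≤ t → s a ≤ s b := by
  intro a b hab hbt
  induction b with
  | zero => rw [Nat.le_zero.mp hab]
  | succ b ih =>
    rcases Nat.eq_or_lt_of_le hab with h | h
    · rw [h]
    · exact le_trans (ih (by omega) (by omega)) (le_of_lt (hs b (by omega)))

theorem exists_block {t : ℕ} {s : ℕ → ℕ} (hs : ∀ b, b < t → s b < s (b + 1))
    {x : ℕ} (h0 : s 0 ≤ x) (hx : x < s t) : ∃ b, b < t ∧ s b ≤ x ∧ x < s (b + 1) := by
  induction t with
  | zero => omega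
  | succ t ih =>
    by_cases h : s t ≤ x
    · exact ⟨t, by omega, h, hx⟩
    · obtain ⟨b, hb, h1, h2⟩ := ih (fun b hb => hs b (by omega)) (by omega)
      exact ⟨b, by omega, h1, h2⟩

noncomputable def encPerm (n k d : ℕ) (hk : 1 ≤ k) (hkn : k ≤ n) (hd : d < k)
    (q : Equiv.Perm (Fin (n - k))) : Equiv.Perm (Fin n) :=
  Equiv.ofBijective
    (fun i => if h : (i : ℕ) < k
      then ⟨((i : ℕ) + d) % k, lt_of_lt_of_le (Nat.mod_lt _ hk) hkn⟩
      else ⟨k + (q ⟨(i : ℕ) - k, by have := i.isLt; omega⟩ : ℕ), by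
        have := (q ⟨(i : ℕ) - k, by have := i.isLt; omega⟩).isLt; omega⟩)
    (by
      rw [Fintype.bijective_iff_injective_and_card]
      refine ⟨fun i j hij => ?_, rfl⟩
      by_cases hi : (i : ℕ) < k <;> by_cases hj : (j : ℕ) < k <;>
        simp only [hi, hj, dif_pos, dif_neg, not_false_iff, Fin.mk.injEq] at hij
      · have h1 : (i : ℕ) + d ≡ (j : ℕ) + d [MOD k] := hij
        have h2 := Nat.ModEq.add_right_cancel' d h1
        have : (i : ℕ) % k = (j : ℕ) % k := h2
        rw [Nat.mod_eq_of_lt hi, Nat.mod_eq_of_lt hj] at this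
        exact Fin.ext this
      · have h5 : ((i:ℕ)+d) % k < k := Nat.mod_lt _ (by omega)
        omega
      · have h5 : ((j:ℕ)+d) % k < k := Nat.mod_lt _ (by omega)
        omega
      · have := q.injective (Fin.ext (by omega : ((q ⟨(i : ℕ) - k, _⟩ : Fin (n-k)) : ℕ) = (q ⟨(j : ℕ) - k, _⟩ : Fin (n-k))))
        have h3 : (i : ℕ) - k = (j : ℕ) - k := congrArg Fin.val this
        exact Fin.ext (by omega))

theorem encPerm_lt {n k d : ℕ} (hk : 1 ≤ k) (hkn : k ≤ n) (hd : d < k)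
    (q : Equiv.Perm (Fin (n - k))) {i : ℕ} (hi : i < n) (h : i < k) :
    (encPerm n k d hk hkn hd q ⟨i, hi⟩ : ℕ) = (i + d) % k := by
  simp [encPerm, Equiv.ofBijective, h]

theorem encPerm_ge {n k d : ℕ} (hk : 1 ≤ k) (hkn : k ≤ n) (hd : d < k)
    (q : Equiv.Perm (Fin (n - k))) {i : ℕ} (hi : i < n) (h : ¬ i < k) :
    (encPerm n k d hk hkn hd q ⟨i, hi⟩ : ℕ) = k + (q ⟨i - k, by omega⟩ : ℕ) := by
  simp [encPerm, Equiv.ofBijective, h]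

end BCaux

namespace BCaux

theorem encPerm_isBlockCyclic {n k d : ℕ} (hk : 1 ≤ k) (hkn : k ≤ n) (hd : d < k)
    (hd2 : 2 ≤ k → 1 ≤ d) {q : Equiv.Perm (Fin (n - k))} (hq : IsBlockCyclic q) :
    IsBlockCyclic (encPerm n k d hk hkn hd q) := by
  obtain ⟨t, s, h0, ht, hmono, hblk⟩ := hq
  refine ⟨t + 1, fun b => match b with | 0 => 0 | b + 1 => k + s b, rfl, ?_, ?_, ?_⟩
  · show k + s t = n; omega
  · intro b hb
    match b with
    | 0 => show 0 < k + s 0; omega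
    | b + 1 => show k + s b < k + s (b + 1); have := hmono b (by omega); omega
  · intro b hb
    match b with
    | 0 =>
      refine ⟨d, by show d < k + s 0 - 0; omega, ?_, ?_⟩
      · show 2 ≤ k + s 0 - 0 → 1 ≤ d
        intro hx; exact hd2 (by omega)
      intro j hj h
      have hj' : 0 + j < k + s 0 := hj
      show (encPerm n k d hk hkn hd q ⟨0 + j, h⟩ : ℕ) = 0 + (j + d) % (k + s 0 - 0)
      have hjk : 0 + j < n := h
      have e1 : (⟨0 + j, h⟩ : Fin n) = ⟨j, by omega⟩ := by apply Fin.ext; simp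
      rw [e1, encPerm_lt hk hkn hd q (by omega) (by omega)]
      have : k + s 0 - 0 = k := by omega
      rw [this]
      omega
    | b + 1 =>
      obtain ⟨e, he1, he2, hev⟩ := hblk b (by omega)
      have hsb : s b ≤ s (b + 1) := le_of_lt (hmono b (by omega))
      have hstop : s (b + 1) ≤ n - k := by
        have := s_mono hmono (Nat.le_of_lt_succ (by omega) : b + 1 ≤ t) (le_refl t)
        omega
      refine ⟨e, by show e < k + s (b+1) - (k + s b); omega, ?_, ?_⟩
      · show 2 ≤ k + s (b+1) - (k + s b) → 1 ≤ e
        intro hx; exact he2 (by omega)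
      intro j hj h
      have hj' : k + s b + j < k + s (b + 1) := hj
      have h' : k + s b + j < n := h
      show (encPerm n k d hk hkn hd q ⟨k + s b + j, h⟩ : ℕ)
        = k + s b + (j + e) % (k + s (b + 1) - (k + s b))
      have hjlt : s b + j < s (b + 1) := by omega
      have hjn : s b + j < n - k := by omega
      have e1 : (⟨k + s b + j, h⟩ : Fin n) = ⟨k + s b + j, h'⟩ := rfl
      rw [e1, encPerm_ge hk hkn hd q h' (by omega)]
      have e2 : (⟨k + s b + j - k, by omega⟩ : Fin (n - k)) = ⟨s b + j, hjn⟩ := by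
        apply Fin.ext; simp; omega
      rw [e2, hev j hjlt hjn]
      have e3 : k + s (b + 1) - (k + s b) = s (b + 1) - s b := by omega
      rw [e3]
      omega

end BCaux

namespace BCaux

theorem exists_enc {n : ℕ} (hn : 1 ≤ n) {p : Equiv.Perm (Fin n)} (hp : IsBlockCyclic p) :
    ∃ (k d : ℕ) (hk : 1 ≤ k) (hkn : k ≤ n) (hd : d < k) (_ : 2 ≤ k → 1 ≤ d)
      (q : Equiv.Perm (Fin (n - k))), IsBlockCyclic q ∧ p = encPerm n k d hk hkn hd q := by
  obtain ⟨t, s, h0, ht, hmono, hblk⟩ := hp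
  have ht1 : 1 ≤ t := by
    by_contra h
    have : t = 0 := by omega
    rw [this, h0] at ht; omega
  have hmono1 : s 0 < s 1 := hmono 0 ht1
  have hk : 1 ≤ s 1 := by omega
  have hkn : s 1 ≤ n := by have := s_mono hmono ht1 (le_refl t); omega
  obtain ⟨d, hd, hd2, hval⟩ := hblk 0 ht1
  rw [h0] at hd hd2 hval
  simp only [Nat.zero_add, Nat.sub_zero] at hd hd2 hval
  have hinv : ∀ (x : ℕ) (hx : x < n), s 1 ≤ x → s 1 ≤ (p ⟨x, hx⟩ : ℕ) ∧ (p ⟨x, hx⟩ : ℕ) < n := by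
    intro x hx hkx
    obtain ⟨b, hbt, hb1, hb2⟩ := exists_block hmono (by omega) (by omega : x < s t)
    have hb1' : 1 ≤ b := by
      by_contra h
      have hb0 : b = 0 := by omega
      rw [hb0] at hb2
      have : s (0 + 1) = s 1 := rfl
      omega
    obtain ⟨e, he1, he2, hev⟩ := hblk b hbt
    have hev' := hev (x - s b) (by omega) (by omega)
    have hsbk : s 1 ≤ s b := s_mono hmono hb1' (by omega)
    have hmod : (x - s b + e) % (s (b + 1) - s b) < s (b + 1) - s b :=
      Nat.mod_lt _ (by omega)
    have hsb1 : s (b + 1) ≤ s t := s_mono hmono (by omega : b + 1 ≤ t) (le_refl t)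
    have e1 : (⟨x, hx⟩ : Fin n) = ⟨s b + (x - s b), by omega⟩ := by apply Fin.ext; simp; omega
    rw [e1, hev']
    omega
  have qbound : ∀ x : ℕ, x < n - s 1 → ∀ hx : s 1 + x < n, (p ⟨s 1 + x, hx⟩ : ℕ) - s 1 < n - s 1 := by
    intro x hlt hx
    have := hinv (s 1 + x) hx (by omega)
    omega
  have qinj : ∀ (i j : Fin (n - s 1)) (hi : s 1 + (i : ℕ) < n) (hj : s 1 + (j : ℕ) < n),
      (p ⟨s 1 + (i : ℕ), hi⟩ : ℕ) - s 1 = (p ⟨s 1 + (j : ℕ), hj⟩ : ℕ) - s 1 → i = j := by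
    intro i j hi hj hij
    have h1 := hinv (s 1 + (i : ℕ)) hi (by omega)
    have h2 := hinv (s 1 + (j : ℕ)) hj (by omega)
    have hpe : (p ⟨s 1 + (i : ℕ), hi⟩ : ℕ) = (p ⟨s 1 + (j : ℕ), hj⟩ : ℕ) := by omega
    have h3 := congrArg Fin.val (p.injective (Fin.ext hpe))
    simp only [Fin.val_mk] at h3
    exact Fin.ext (by omega)
  set q : Equiv.Perm (Fin (n - s 1)) := Equiv.ofBijective
    (fun i : Fin (n - s 1) =>
      (⟨(p ⟨s 1 + (i : ℕ), by have := i.isLt; omega⟩ : ℕ) - s 1,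
        qbound (i : ℕ) i.isLt _⟩ : Fin (n - s 1)))
    (by
      rw [Fintype.bijective_iff_injective_and_card]
      exact ⟨fun i j hij => qinj i j (by have := i.isLt; omega) (by have := j.isLt; omega)
        (congrArg Fin.val hij), rfl⟩) with hq
  have hq_apply : ∀ (x : ℕ) (hx : x < n - s 1) (hx2 : s 1 + x < n),
      (q ⟨x, hx⟩ : ℕ) = (p ⟨s 1 + x, hx2⟩ : ℕ) - s 1 := by
    intro x hx hx2; rfl
  refine ⟨s 1, d, hk, hkn, hd, hd2, q, ?_, ?_⟩
  · refine ⟨t - 1, fun b => s (b + 1) - s 1, by simp, ?_, ?_, ?_⟩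
    · show s (t - 1 + 1) - s 1 = n - s 1
      have : t - 1 + 1 = t := by omega
      rw [this, ht]
    · intro b hb
      show s (b + 1) - s 1 < s (b + 1 + 1) - s 1
      have h1 : s 1 ≤ s (b + 1) := s_mono hmono (by omega) (by omega)
      have h2 : s (b + 1) < s (b + 2) := hmono (b + 1) (by omega)
      have h3 : s (b + 1 + 1) = s (b + 2) := rfl
      omega
    · intro b hb
      obtain ⟨e, he1, he2, hev⟩ := hblk (b + 1) (by omega)
      have hk1 : s 1 ≤ s (b + 1) := s_mono hmono (by omega) (by omega)
      have hk2 : s (b + 1) < s (b + 2) := hmono (b + 1) (by omega)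
      have hk3 : s (b + 2) ≤ s t := s_mono hmono (by omega : b + 2 ≤ t) (le_refl t)
      have heq : s (b + 1 + 1) = s (b + 2) := rfl
      have hsz : s (b + 1 + 1) - s 1 - (s (b + 1) - s 1) = s (b + 2) - s (b + 1) := by omega
      refine ⟨e, ?_, ?_, ?_⟩
      · show e < s (b + 1 + 1) - s 1 - (s (b + 1) - s 1)
        omega
      · show 2 ≤ s (b + 1 + 1) - s 1 - (s (b + 1) - s 1) → 1 ≤ e
        intro hx; exact he2 (by omega)
      intro j hj h
      have hj2 : s (b + 1) - s 1 + j < s (b + 1 + 1) - s 1 := hj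
      have hj' : s (b + 1) + j < s (b + 2) := by omega
      show (q ⟨s (b + 1) - s 1 + j, h⟩ : ℕ)
        = s (b + 1) - s 1 + (j + e) % (s (b + 1 + 1) - s 1 - (s (b + 1) - s 1))
      rw [hq_apply (s (b + 1) - s 1 + j) h (by omega)]
      have e2 : (⟨s 1 + (s (b + 1) - s 1 + j), by omega⟩ : Fin n) = ⟨s (b + 1) + j, by omega⟩ := by
        apply Fin.ext; simp; omega
      rw [e2, hev j hj' (by omega), heq]
      have hsz' : s (b + 2) - s 1 - (s (b + 1) - s 1) = s (b + 2) - s (b + 1) := by omega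
      have hmod : (j + e) % (s (b + 2) - s (b + 1)) < s (b + 2) - s (b + 1) :=
        Nat.mod_lt _ (by omega)
      rw [hsz']
      omega
  · apply Equiv.ext
    intro i
    apply Fin.ext
    by_cases hik : (i : ℕ) < s 1
    · have e1 : i = ⟨(i : ℕ), i.isLt⟩ := rfl
      rw [e1, encPerm_lt hk hkn hd q i.isLt hik]
      exact hval (i : ℕ) hik i.isLt
    · have e1 : i = ⟨(i : ℕ), i.isLt⟩ := rfl
      rw [e1, encPerm_ge hk hkn hd q i.isLt hik]
      rw [hq_apply ((i : ℕ) - s 1) (by have := i.isLt; omega) (by have := i.isLt; omega)]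
      have e2 : (⟨s 1 + ((i : ℕ) - s 1), by have := i.isLt; omega⟩ : Fin n)
          = ⟨(i : ℕ), i.isLt⟩ := by
        apply Fin.ext; simp; omega
      rw [e2]
      have := hinv (i : ℕ) i.isLt (by omega)
      omega

end BCaux

namespace BCaux

theorem enc_k_eq_of_le {n k k' d d' : ℕ} {hk : 1 ≤ k} {hkn : k ≤ n} {hd : d < k}
    {hk' : 1 ≤ k'} {hkn' : k' ≤ n} {hd' : d' < k'}
    {q : Equiv.Perm (Fin (n - k))} {q' : Equiv.Perm (Fin (n - k'))}
    (hd2 : 2 ≤ k → 1 ≤ d) (hd2' : 2 ≤ k' → 1 ≤ d')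
    (hkk : k ≤ k') (h : encPerm n k d hk hkn hd q = encPerm n k' d' hk' hkn' hd' q') :
    k = k' := by
  by_contra hne
  have hlt : k < k' := lt_of_le_of_ne hkk hne
  have hn0 : 0 < n := by omega
  have hv0 : (encPerm n k d hk hkn hd q ⟨0, hn0⟩ : ℕ)
      = (encPerm n k' d' hk' hkn' hd' q' ⟨0, hn0⟩ : ℕ) := by rw [h]
  rw [encPerm_lt hk hkn hd q hn0 (by omega), encPerm_lt hk' hkn' hd' q' hn0 (by omega)] at hv0
  rw [Nat.zero_add, Nat.zero_add, Nat.mod_eq_of_lt hd, Nat.mod_eq_of_lt hd'] at hv0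
  have hd1 : 1 ≤ d := by
    rcases Nat.eq_zero_or_pos d with h0 | h1
    · have : 1 ≤ d' := hd2' (by omega)
      omega
    · exact h1
  have hin : k - d < n := by omega
  have hv1 : (encPerm n k d hk hkn hd q ⟨k - d, hin⟩ : ℕ)
      = (encPerm n k' d' hk' hkn' hd' q' ⟨k - d, hin⟩ : ℕ) := by rw [h]
  rw [encPerm_lt hk hkn hd q hin (by omega), encPerm_lt hk' hkn' hd' q' hin (by omega)] at hv1
  have e1 : (k - d + d) % k = 0 := by
    have : k - d + d = k := by omega
    rw [this, Nat.mod_self]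
  have e2 : (k - d + d') % k' = k := by
    have : k - d + d' = k := by omega
    rw [this, Nat.mod_eq_of_lt hlt]
  omega

theorem enc_inj {n k k' d d' : ℕ} {hk : 1 ≤ k} {hkn : k ≤ n} {hd : d < k}
    {hk' : 1 ≤ k'} {hkn' : k' ≤ n} {hd' : d' < k'}
    {q : Equiv.Perm (Fin (n - k))} {q' : Equiv.Perm (Fin (n - k'))}
    (hd2 : 2 ≤ k → 1 ≤ d) (hd2' : 2 ≤ k' → 1 ≤ d')
    (h : encPerm n k d hk hkn hd q = encPerm n k' d' hk' hkn' hd' q') :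
    k = k' ∧ d = d' ∧ HEq q q' := by
  have hkeq : k = k' := by
    rcases le_total k k' with hle | hle
    · exact enc_k_eq_of_le hd2 hd2' hle h
    · exact (enc_k_eq_of_le hd2' hd2 hle h.symm).symm
  subst hkeq
  have hn0 : 0 < n := by omega
  have hv0 : (encPerm n k d hk hkn hd q ⟨0, hn0⟩ : ℕ)
      = (encPerm n k d' hk' hkn' hd' q' ⟨0, hn0⟩ : ℕ) := by rw [h]
  rw [encPerm_lt hk hkn hd q hn0 (by omega), encPerm_lt hk' hkn' hd' q' hn0 (by omega)] at hv0
  rw [Nat.zero_add, Nat.zero_add, Nat.mod_eq_of_lt hd, Nat.mod_eq_of_lt hd'] at hv0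
  subst hv0
  refine ⟨rfl, rfl, heq_of_eq ?_⟩
  apply Equiv.ext
  intro i
  have hin : k + (i : ℕ) < n := by have := i.isLt; omega
  have hv : (encPerm n k d hk hkn hd q ⟨k + (i : ℕ), hin⟩ : ℕ)
      = (encPerm n k d hk' hkn' hd' q' ⟨k + (i : ℕ), hin⟩ : ℕ) := by rw [h]
  rw [encPerm_ge hk hkn hd q hin (by omega), encPerm_ge hk' hkn' hd' q' hin (by omega)] at hv
  have e1 : (⟨k + (i : ℕ) - k, by have := i.isLt; omega⟩ : Fin (n - k)) = i := by
    apply Fin.ext; simp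
  rw [e1] at hv
  exact Fin.ext (by omega)

end BCaux

namespace BCaux

def W (k : ℕ) : Type := {d : Fin k // 2 ≤ k → 1 ≤ (d : ℕ)}

instance (k : ℕ) : Fintype (W k) := by unfold W; infer_instance

theorem card_W_one : Nat.card (W 1) = 1 := by
  unfold W
  rw [Nat.card_eq_fintype_card]
  rw [Fintype.card_subtype]
  rw [show (Finset.univ.filter fun d : Fin 1 => 2 ≤ 1 → 1 ≤ (d : ℕ)) = Finset.univ by
    ext d; simp]
  simp

theorem card_W_ge (k : ℕ) (h2 : 2 ≤ k) : Nat.card (W k) = k - 1 := by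
  unfold W
  rw [Nat.card_eq_fintype_card]
  rw [Fintype.card_subtype]
  have hsplit := Finset.card_filter_add_card_filter_not
    (s := (Finset.univ : Finset (Fin k))) (p := fun d => 2 ≤ k → 1 ≤ (d : ℕ))
  have hneg : (Finset.univ.filter fun d : Fin k => ¬ (2 ≤ k → 1 ≤ (d : ℕ))).card = 1 := by
    rw [show (Finset.univ.filter fun d : Fin k => ¬ (2 ≤ k → 1 ≤ (d : ℕ)))
        = {(⟨0, by omega⟩ : Fin k)} by
      ext d; simp [Fin.ext_iff]; omega]
    simp
  have huniv : (Finset.univ : Finset (Fin k)).card = k := by simp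
  omega

end BCaux

namespace BCaux

theorem card_step (n : ℕ) (hn : 1 ≤ n) :
    blockCyclicCount n
      = ∑ k ∈ Finset.Icc 1 n, Nat.card (W k) * blockCyclicCount (n - k) := by
  classical
  set BC := fun m => {p : Equiv.Perm (Fin m) // IsBlockCyclic p} with hBC
  have key : ∀ k : ↑(Finset.Icc 1 n), 1 ≤ (k : ℕ) ∧ (k : ℕ) ≤ n := by
    intro k; have := k.2; rw [Finset.mem_Icc] at this; exact this
  set F : ((k : ↑(Finset.Icc 1 n)) × (W (k : ℕ) × BC (n - (k : ℕ)))) → BC n :=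
    fun x =>
      ⟨encPerm n (x.1 : ℕ) ((x.2.1.1 : ℕ)) (key x.1).1 (key x.1).2 x.2.1.1.isLt x.2.2.1,
        encPerm_isBlockCyclic _ _ _ x.2.1.2 x.2.2.2⟩ with hF
  have hFbij : Function.Bijective F := by
    constructor
    · rintro ⟨⟨k, hk⟩, ⟨d, hdW⟩, ⟨q, hq⟩⟩ ⟨⟨k', hk'⟩, ⟨d', hdW'⟩, ⟨q', hq'⟩⟩ hab
    
      have hab' := congrArg Subtype.val hab
      simp only [hF] at hab'
      obtain ⟨hkeq, hdeq, hqeq⟩ := enc_inj hdW hdW' hab'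
      subst hkeq
      have hdeq' : d = d' := Fin.ext hdeq
      subst hdeq'
      have hqeq' : q = q' := eq_of_heq hqeq
      subst hqeq'
      rfl
    · intro p
      obtain ⟨k, d, hk1, hkn1, hd1, hd21, q, hqbc, hpe⟩ := exists_enc hn p.2
      refine ⟨⟨⟨k, Finset.mem_Icc.mpr ⟨hk1, hkn1⟩⟩, ⟨⟨d, hd1⟩, hd21⟩, ⟨q, hqbc⟩⟩, ?_⟩
      apply Subtype.ext
      simp only [hF]
      exact hpe.symm
  letI : ∀ m, Fintype (BC m) := fun m => Fintype.ofFinite _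
  have h1 : blockCyclicCount n = Nat.card ((k : ↑(Finset.Icc 1 n)) × (W (k : ℕ) × BC (n - (k : ℕ)))) :=
    (Nat.card_eq_of_bijective F hFbij).symm
  rw [h1, Nat.card_eq_fintype_card, Fintype.card_sigma]
  have h2 : ∀ k : ↑(Finset.Icc 1 n),
      Fintype.card (W (k : ℕ) × BC (n - (k : ℕ)))
        = Nat.card (W (k : ℕ)) * blockCyclicCount (n - (k : ℕ)) := by
    intro k
    rw [Fintype.card_prod, ← Nat.card_eq_fintype_card, ← Nat.card_eq_fintype_card]
    rfl
  rw [← Finset.sum_attach (Finset.Icc 1 n) (fun k => Nat.card (W k) * blockCyclicCount (n - k))]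
  exact Finset.sum_congr rfl fun k _ => h2 k

end BCaux

namespace BCaux

theorem h_zero : blockCyclicCount 0 = 1 := by
  rw [blockCyclicCount]
  have hbc : ∀ p : Equiv.Perm (Fin 0), IsBlockCyclic p := fun p =>
    ⟨0, fun _ => 0, rfl, rfl, fun b hb => absurd hb (by omega), fun b hb => absurd hb (by omega)⟩
  haveI : Subsingleton {p : Equiv.Perm (Fin 0) // IsBlockCyclic p} := by
    constructor
    intro a b
    apply Subtype.ext
    apply Equiv.ext
    intro x
    exact x.elim0
  haveI : Nonempty {p : Equiv.Perm (Fin 0) // IsBlockCyclic p} := ⟨⟨1, hbc 1⟩⟩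
  exact Nat.card_unique

/-- The sum reindexed: `A n`. -/
noncomputable def A (n : ℕ) : ℕ := ∑ i ∈ Finset.range (n - 1), (n - 1 - i) * blockCyclicCount i

theorem sum_Icc_eq_A (n : ℕ) :
    ∑ k ∈ Finset.Icc 2 n, (k - 1) * blockCyclicCount (n - k) = A n := by
  rw [A]
  refine Finset.sum_nbij' (fun k => n - k) (fun i => n - i) ?_ ?_ ?_ ?_ ?_
  · intro k hk; simp only [Finset.mem_Icc] at hk; simp only [Finset.mem_range]; omega
  · intro i hi; simp only [Finset.mem_range] at hi; simp only [Finset.mem_Icc]; omega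
  · intro k hk; simp only [Finset.mem_Icc] at hk; omega
  · intro i hi; simp only [Finset.mem_range] at hi; omega
  · intro k hk; simp only [Finset.mem_Icc] at hk
    congr 1
    omega

theorem rec_A (n : ℕ) (hn : 1 ≤ n) :
    blockCyclicCount n = blockCyclicCount (n - 1) + A n := by
  rw [card_step n hn]
  have hsplit : Finset.Icc 1 n = insert 1 (Finset.Icc 2 n) := by
    ext k; simp [Finset.mem_Icc]; omega
  rw [hsplit, Finset.sum_insert (by simp [Finset.mem_Icc])]
  rw [card_W_one, one_mul, ← sum_Icc_eq_A]
  congr 1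
  apply Finset.sum_congr rfl
  intro k hk
  rw [Finset.mem_Icc] at hk
  rw [card_W_ge k hk.1]

theorem rec_Icc (n : ℕ) (hn : 1 ≤ n) :
    blockCyclicCount n = blockCyclicCount (n - 1)
      + ∑ k ∈ Finset.Icc 2 n, (k - 1) * blockCyclicCount (n - k) := by
  rw [sum_Icc_eq_A]; exact rec_A n hn

noncomputable def B (n : ℕ) : ℕ := ∑ i ∈ Finset.range n, blockCyclicCount i

theorem A_succ (n : ℕ) : A (n + 1) = A n + B n := by
  cases n with
  | zero => simp [A, B]
  | succ m =>
    rw [A, B, Nat.add_sub_cancel, Finset.sum_range_succ, A, Nat.add_sub_cancel,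
      Finset.sum_range_succ]
    have hc : ∀ i ∈ Finset.range m, (m + 1 - i) * blockCyclicCount i
        = (m - i) * blockCyclicCount i + blockCyclicCount i := by
      intro i hi; rw [Finset.mem_range] at hi
      have : m + 1 - i = (m - i) + 1 := by omega
      rw [this, Nat.add_mul, Nat.one_mul]
    rw [Finset.sum_congr rfl hc, Finset.sum_add_distrib]
    have : m + 1 - m = 1 := by omega
    rw [this, Nat.one_mul]
    omega

theorem B_succ (n : ℕ) : B (n + 1) = B n + blockCyclicCount n := Finset.sum_range_succ _ _

theorem third_rec (m : ℕ) :
    blockCyclicCount (m + 3) + 2 * blockCyclicCount (m + 1)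
      = 3 * blockCyclicCount (m + 2) + blockCyclicCount m := by
  have e1 := rec_A (m + 3) (by omega)
  have e2 := rec_A (m + 2) (by omega)
  have e3 := rec_A (m + 1) (by omega)
  rw [show m + 3 - 1 = m + 2 by omega] at e1
  rw [show m + 2 - 1 = m + 1 by omega] at e2
  rw [show m + 1 - 1 = m by omega] at e3
  have a1 := A_succ (m + 2)
  have a2 := A_succ (m + 1)
  have b1 := B_succ (m + 1)
  have : m + 2 + 1 = m + 3 := by omega
  rw [this] at a1
  have : m + 1 + 1 = m + 2 := by omega
  rw [this] at a2 b1
  omega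

theorem h_one : blockCyclicCount 1 = 1 := by
  have := rec_Icc 1 (by omega)
  simpa [h_zero] using this

theorem h_two : blockCyclicCount 2 = 2 := by
  have := rec_Icc 2 (by omega)
  rw [show Finset.Icc 2 2 = {2} by rfl] at this
  simpa [h_zero, h_one] using this

end BCaux


open PowerSeries in
/-- The generating function of block-cyclic permutations is (1-z)²/(1-3z+2z²-z³);
equivalently h_n = h_{n-1} + Σ_{k=2}^{n} (k-1) h_{n-k} for n ≥ 1, and
h_n = 3h_{n-1} - 2h_{n-2} + h_{n-3} for n ≥ 3, with h₀ = 1, h₁ = 1, h₂ = 2. -/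
theorem blockCyclic_generating_function :
    (PowerSeries.mk fun n => (blockCyclicCount n : ℚ)) *
        (1 - 3 * X + 2 * X ^ 2 - X ^ 3) = (1 - X) ^ 2 ∧
    blockCyclicCount 0 = 1 ∧ blockCyclicCount 1 = 1 ∧ blockCyclicCount 2 = 2 ∧
    (∀ n : ℕ, 1 ≤ n →
      blockCyclicCount n =
        blockCyclicCount (n - 1) +
          ∑ k ∈ Finset.Icc 2 n, (k - 1) * blockCyclicCount (n - k)) ∧
    (∀ n : ℕ, 3 ≤ n →
      blockCyclicCount n + 2 * blockCyclicCount (n - 2) =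
        3 * blockCyclicCount (n - 1) + blockCyclicCount (n - 3)) := by
  refine ⟨?_, BCaux.h_zero, BCaux.h_one, BCaux.h_two, fun n hn => BCaux.rec_Icc n hn, ?_⟩
  · apply BCaux.gf_of_rec
    · intro n
      have h := BCaux.third_rec n
      have h' : (blockCyclicCount (n+3) : ℚ) + 2 * blockCyclicCount (n+1)
          = 3 * blockCyclicCount (n+2) + blockCyclicCount n := by exact_mod_cast h
      linarith
    · rw [BCaux.h_zero]; norm_num
    · rw [BCaux.h_one]; norm_num
    · rw [BCaux.h_two]; norm_num
  · intro n hn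
    have := BCaux.third_rec (n - 3)
    rw [show n - 3 + 3 = n by omega, show n - 3 + 1 = n - 2 by omega,
      show n - 3 + 2 = n - 1 by omega] at this
    exact this
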